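/- (Siegel-type identity for ♭) With Ŝ_{jk} as above and X, Y square matrices of size 2n₂ such that I − Ŝ₂₂X and I − Ŝ₂₂Y are invertible, the Möbius map Ψ(X) = Ŝ₁₁ + Ŝ₁₂ X (I − Ŝ₂₂ X)^{-1} Ŝ₂₁ satisfies Ψ(X)^♭ Ψ(Y) = I − Ŝ₂₁^♭ (I − X^♭ Ŝ₂₂^♭)^{-1} (I − X^♭ Y)(I − Ŝ₂₂ Y)^{-1} Ŝ₂₁. -/
import Mathlib


open Matrix

noncomputable section

/-- Doubled-up matrix `Δ(E₋,E₊)`. -/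
def dbl {R K : Type*} (Em Ep : Matrix R K ℂ) : Matrix (R ⊕ R) (K ⊕ K) ℂ :=
  Matrix.fromBlocks Em Ep (Ep.map (starRingEnd ℂ)) (Em.map (starRingEnd ℂ))

/-- The matrix `J = diag(I, -I)`. -/
def Jm (N : Type*) [DecidableEq N] : Matrix (N ⊕ N) (N ⊕ N) ℂ :=
  Matrix.fromBlocks 1 0 0 (-1)

/-- The `♭` involution `X^♭ = J Xᴴ J`. -/
def flatB {N M : Type*} [Fintype N] [DecidableEq N] [Fintype M] [DecidableEq M]
    (X : Matrix (N ⊕ N) (M ⊕ M) ℂ) : Matrix (M ⊕ M) (N ⊕ N) ℂ :=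
  Jm M * Xᴴ * Jm N

/-- Bogoliubov matrix: doubled-up and `♭`-unitary. -/
def IsBog {N : Type*} [Fintype N] [DecidableEq N]
    (S : Matrix (N ⊕ N) (N ⊕ N) ℂ) : Prop :=
  (∃ Sm Sp, S = dbl Sm Sp) ∧ flatB S * S = 1 ∧ S * flatB S = 1

section Aux

variable {N M P : Type*} [Fintype N] [DecidableEq N] [Fintype M] [DecidableEq M]
  [Fintype P] [DecidableEq P]

lemma Jm_mul_Jm (N : Type*) [Fintype N] [DecidableEq N] : Jm N * Jm N = 1 := by
  simp [Jm, Matrix.fromBlocks_multiply, ← Matrix.fromBlocks_one]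

lemma Jm_inv (N : Type*) [Fintype N] [DecidableEq N] : (Jm N)⁻¹ = Jm N :=
  Matrix.inv_eq_left_inv (Jm_mul_Jm N)

lemma flatB_mul (A : Matrix (N ⊕ N) (M ⊕ M) ℂ) (B : Matrix (M ⊕ M) (P ⊕ P) ℂ) :
    flatB (A * B) = flatB B * flatB A := by
  unfold flatB
  rw [conjTranspose_mul,
    show Jm P * (Bᴴ * Aᴴ) * Jm N = Jm P * Bᴴ * ((Jm M * Jm M) * (Aᴴ * Jm N)) from by
      rw [Jm_mul_Jm, Matrix.one_mul]; simp only [Matrix.mul_assoc]]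
  simp only [Matrix.mul_assoc]

lemma flatB_add (A B : Matrix (N ⊕ N) (M ⊕ M) ℂ) :
    flatB (A + B) = flatB A + flatB B := by
  unfold flatB
  rw [conjTranspose_add, Matrix.mul_add, Matrix.add_mul]

lemma flatB_one : flatB (1 : Matrix (N ⊕ N) (N ⊕ N) ℂ) = 1 := by
  unfold flatB
  rw [conjTranspose_one, Matrix.mul_one, Jm_mul_Jm]

lemma flatB_sub (A B : Matrix (N ⊕ N) (M ⊕ M) ℂ) :
    flatB (A - B) = flatB A - flatB B := by
  unfold flatB
  rw [conjTranspose_sub, Matrix.mul_sub, Matrix.sub_mul]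

lemma flatB_inv (A : Matrix (N ⊕ N) (N ⊕ N) ℂ) : flatB (A⁻¹) = (flatB A)⁻¹ := by
  unfold flatB
  rw [Matrix.conjTranspose_nonsing_inv, Matrix.mul_inv_rev, Matrix.mul_inv_rev,
    Jm_inv, Matrix.mul_assoc]

lemma isUnit_flatB {A : Matrix (N ⊕ N) (N ⊕ N) ℂ} (h : IsUnit A) :
    IsUnit (flatB A) := by
  rcases h with ⟨u, rfl⟩
  exact ⟨⟨flatB (↑u : Matrix (N ⊕ N) (N ⊕ N) ℂ),
    flatB (↑u⁻¹ : Matrix (N ⊕ N) (N ⊕ N) ℂ),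
    by rw [← flatB_mul, u.inv_mul, flatB_one],
    by rw [← flatB_mul, u.mul_inv, flatB_one]⟩, rfl⟩

end Aux

theorem siegel_identity {n1 n2 : Type*}
    [Fintype n1] [DecidableEq n1] [Fintype n2] [DecidableEq n2]
    (S11 : Matrix (n1 ⊕ n1) (n1 ⊕ n1) ℂ) (S12 : Matrix (n1 ⊕ n1) (n2 ⊕ n2) ℂ)
    (S21 : Matrix (n2 ⊕ n2) (n1 ⊕ n1) ℂ) (S22 : Matrix (n2 ⊕ n2) (n2 ⊕ n2) ℂ)
    (h1 : flatB S11 * S11 + flatB S21 * S21 = 1)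
    (h2 : flatB S11 * S12 + flatB S21 * S22 = 0)
    (h3 : flatB S12 * S11 + flatB S22 * S21 = 0)
    (h4 : flatB S12 * S12 + flatB S22 * S22 = 1)
    (h5 : S11 * flatB S11 + S12 * flatB S12 = 1)
    (h6 : S11 * flatB S21 + S12 * flatB S22 = 0)
    (h7 : S21 * flatB S11 + S22 * flatB S12 = 0)
    (h8 : S21 * flatB S21 + S22 * flatB S22 = 1)
    (X Y : Matrix (n2 ⊕ n2) (n2 ⊕ n2) ℂ)
    (hX : IsUnit (1 - S22 * X)) (hY : IsUnit (1 - S22 * Y)) :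
    flatB (S11 + S12 * X * (1 - S22 * X)⁻¹ * S21) *
        (S11 + S12 * Y * (1 - S22 * Y)⁻¹ * S21) =
      1 - flatB S21 * (1 - flatB X * flatB S22)⁻¹ * (1 - flatB X * Y) *
        (1 - S22 * Y)⁻¹ * S21 := by
  have hYdet : IsUnit (1 - S22 * Y).det := (Matrix.isUnit_iff_isUnit_det _).mp hY
  set a := S11
  set b := S12
  set c := S21
  set d := S22
  set a' := flatB S11 with ha'
  set b' := flatB S12 with hb'
  set c' := flatB S21 with hc'
  set d' := flatB S22 with hd'
  set x' := flatB X with hx'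
  set B := (1 - d * Y)⁻¹ with hBdef
  have hflat : flatB (1 - d * X) = 1 - x' * d' := by
    rw [flatB_sub, flatB_one, flatB_mul]
  have hUdet : IsUnit (1 - x' * d').det := by
    rw [← hflat]; exact (Matrix.isUnit_iff_isUnit_det _).mp (isUnit_flatB hX)
  set Abar := (1 - x' * d')⁻¹ with hAdef
  have hA1 : Abar * (1 - x' * d') = 1 := Matrix.nonsing_inv_mul _ hUdet
  have hB1 : (1 - d * Y) * B = 1 := Matrix.mul_nonsing_inv _ hYdet
  have hL : flatB (a + b * X * (1 - d * X)⁻¹ * c)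
      = a' + c' * Abar * x' * b' := by
    rw [flatB_add, flatB_mul, flatB_mul, flatB_mul, flatB_inv, hflat, hAdef,
      Matrix.mul_assoc, Matrix.mul_assoc]
  rw [hL]
  have hw : B * c - d * (Y * (B * c)) = c := by
    calc B * c - d * (Y * (B * c)) = (1 - d * Y) * B * c := by
          simp only [Matrix.sub_mul, Matrix.one_mul, Matrix.mul_assoc]
      _ = c := by rw [hB1, Matrix.one_mul]
  have hAbar : ∀ (Z : Matrix (n2 ⊕ n2) (n1 ⊕ n1) ℂ),
      Abar * ((1 - x' * d') * Z) = Z := fun Z => by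
    rw [← Matrix.mul_assoc, hA1, Matrix.one_mul]
  have h0 : ∀ w : Matrix (n2 ⊕ n2) (n1 ⊕ n1) ℂ,
      (1 - x' * Y) * w
        = (1 - x' * d') * ((w - d * (Y * w)) + d * (Y * w))
          + (x' * (d' * (w - d * (Y * w)))
            - x' * (Y * w - d' * (d * (Y * w)))) := fun w => by
    simp only [Matrix.sub_mul, Matrix.mul_sub, Matrix.add_mul, Matrix.mul_add,
      Matrix.one_mul, Matrix.mul_assoc]
    abel
  have h0' := h0 (B * c)
  rw [hw] at h0'
  have claim : c + d * (Y * (B * c))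
      + (Abar * (x' * (d' * c))
        - Abar * (x' * (Y * (B * c) - d' * (d * (Y * (B * c))))))
      = Abar * ((1 - x' * Y) * (B * c)) := by
    rw [h0', Matrix.mul_add, Matrix.mul_sub, hAbar]
    simp only [Matrix.mul_sub]
  have e1 : a' * a = 1 - c' * c := eq_sub_of_add_eq h1
  have e2 : a' * b = -(c' * d) := eq_neg_of_add_eq_zero_left h2
  have e3 : b' * a = -(d' * c) := eq_neg_of_add_eq_zero_left h3
  have e4 : b' * b = 1 - d' * d := eq_sub_of_add_eq h4
  have e2' : a' * (b * (Y * (B * c))) = -(c' * (d * (Y * (B * c)))) := by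
    rw [← Matrix.mul_assoc, e2, Matrix.neg_mul, Matrix.mul_assoc]
  have e4' : b' * (b * (Y * (B * c)))
      = Y * (B * c) - d' * (d * (Y * (B * c))) := by
    rw [← Matrix.mul_assoc, e4, Matrix.sub_mul, Matrix.one_mul, Matrix.mul_assoc]
  calc (a' + c' * Abar * x' * b') * (a + b * Y * B * c)
      = a' * a + a' * (b * (Y * (B * c)))
        + (c' * (Abar * (x' * (b' * a)))
          + c' * (Abar * (x' * (b' * (b * (Y * (B * c))))))) := by
        simp only [Matrix.add_mul, Matrix.mul_add, Matrix.mul_assoc]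
        abel
    _ = (1 - c' * c) + -(c' * (d * (Y * (B * c))))
        + (c' * (Abar * (x' * (-(d' * c))))
          + c' * (Abar * (x' * (Y * (B * c) - d' * (d * (Y * (B * c))))))) := by
        rw [e1, e2', e3, e4']
    _ = 1 - c' * (c + d * (Y * (B * c))
        + (Abar * (x' * (d' * c))
          - Abar * (x' * (Y * (B * c) - d' * (d * (Y * (B * c))))))) := by
        simp only [Matrix.mul_add, Matrix.mul_sub, Matrix.mul_neg, Matrix.mul_one]
        abel
    _ = 1 - c' * (Abar * ((1 - x' * Y) * (B * c))) := by rw [← claim]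
    _ = 1 - c' * Abar * (1 - x' * Y) * B * c := by
        simp only [Matrix.mul_assoc]
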